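/- Von Neumann's trace inequality: for real n×n matrices A and B, tr(AᵀB) ≤ Σ_{i=1}^n σ_i(A)·σ_i(B), where σ_1(·) ≥ … ≥ σ_n(·) denote the singular values in nonincreasing order. -/

import Mathlib

open Matrix Finset

/-- The (unordered) singular values of a real square matrix: square roots of the
eigenvalues of `Aᴴ A`. -/
noncomputable def singVals {n : ℕ} (A : Matrix (Fin n) (Fin n) ℝ) : Fin n → ℝ :=
  fun i => Real.sqrt ((show (Aᵀ * A).IsHermitian from Matrix.isHermitian_conjTranspose_mul_self A).eigenvalues i)

section Helpers


lemma abel_nonpos (m : ℕ) (b d : ℕ → ℝ)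
    (hb : ∀ k, k + 1 < m → b (k + 1) ≤ b k)
    (hd : ∀ K ≤ m, ∑ j ∈ range K, d j ≤ 0)
    (hsum : ∑ j ∈ range m, d j = 0) :
    ∑ j ∈ range m, b j * d j ≤ 0 := by
  rcases Nat.eq_zero_or_pos m with hm | hm
  · simp [hm]
  have H := Finset.sum_range_by_parts b d m
  simp only [smul_eq_mul] at H
  rw [H, hsum, mul_zero, zero_sub, neg_nonpos]
  apply Finset.sum_nonneg
  intro i hi
  rw [Finset.mem_range] at hi
  have h1 : b (i + 1) ≤ b i := hb i (by omega)
  have h2 : ∑ j ∈ range (i + 1), d j ≤ 0 := hd (i + 1) (by omega)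
  nlinarith

lemma filter_lt_range (m K : ℕ) (hKm : K ≤ m) :
    (range m).filter (· < K) = range K := by
  ext i; simp; omega

lemma prefix_bound (m K : ℕ) (hK1 : 1 ≤ K) (hKm : K ≤ m) (a s : ℕ → ℝ)
    (ha : ∀ i j, i ≤ j → j < m → a j ≤ a i)
    (hs0 : ∀ i, i < m → 0 ≤ s i) (hs1 : ∀ i, i < m → s i ≤ 1)
    (hsum : ∑ i ∈ range m, s i = K) :
    ∑ i ∈ range m, a i * s i ≤ ∑ i ∈ range K, a i := by
  have hA : ∑ i ∈ range K, a i = ∑ i ∈ range m, (if i < K then a i else 0) := by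
    rw [← Finset.sum_filter, filter_lt_range m K hKm]
  have hC : ∑ i ∈ range m, (if i < K then (1:ℝ) else 0) = K := by
    rw [← Finset.sum_filter, filter_lt_range m K hKm]; simp
  have key : ∀ i ∈ range m,
      a i * s i - (if i < K then a i else 0)
        ≤ a (K - 1) * (s i - if i < K then 1 else 0) := by
    intro i hi
    rw [Finset.mem_range] at hi
    by_cases h : i < K
    · simp only [if_pos h]
      have h1 : a (K - 1) ≤ a i := ha i (K - 1) (by omega) (by omega)
      have h2 : s i ≤ 1 := hs1 i hi
      nlinarith
    · simp only [if_neg h]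
      have h1 : a i ≤ a (K - 1) := ha (K - 1) i (by omega) hi
      have h2 : 0 ≤ s i := hs0 i hi
      nlinarith
  have hsumkey := Finset.sum_le_sum key
  rw [Finset.sum_sub_distrib, ← hA, ← Finset.mul_sum, Finset.sum_sub_distrib, hsum, hC] at hsumkey
  simpa using hsumkey

/-- Doubly stochastic rearrangement: `∑ᵢⱼ aᵢ bⱼ Sᵢⱼ ≤ ∑ᵢ aᵢ bᵢ`. -/
lemma ds_nat (m : ℕ) (a b : ℕ → ℝ)
    (ha : ∀ i j, i ≤ j → j < m → a j ≤ a i)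
    (hb : ∀ i j, i ≤ j → j < m → b j ≤ b i)
    (S : ℕ → ℕ → ℝ) (hS0 : ∀ i j, i < m → j < m → 0 ≤ S i j)
    (hrow : ∀ i, i < m → ∑ j ∈ range m, S i j = 1)
    (hcol : ∀ j, j < m → ∑ i ∈ range m, S i j = 1) :
    ∑ i ∈ range m, ∑ j ∈ range m, a i * b j * S i j ≤ ∑ i ∈ range m, a i * b i := by
  set c : ℕ → ℝ := fun j => ∑ i ∈ range m, a i * S i j with hc
  have hLHS : ∑ i ∈ range m, ∑ j ∈ range m, a i * b j * S i j
      = ∑ j ∈ range m, b j * c j := by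
    rw [Finset.sum_comm]
    refine Finset.sum_congr rfl fun j _ => ?_
    rw [Finset.mul_sum]
    refine Finset.sum_congr rfl fun i _ => ?_
    ring
  rw [hLHS]
  have key : ∑ j ∈ range m, b j * (c j - a j) ≤ 0 := by
    apply abel_nonpos m b (fun j => c j - a j)
    · intro k hk
      exact hb k (k + 1) (by omega) hk
    · intro K hKm
      rcases Nat.eq_zero_or_pos K with h0 | hK1
      · simp [h0]
      rw [Finset.sum_sub_distrib, sub_nonpos]
      have hcK : ∑ j ∈ range K, c j
          = ∑ i ∈ range m, a i * (∑ j ∈ range K, S i j) := by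
        rw [Finset.sum_comm]
        exact Finset.sum_congr rfl fun i _ => by rw [Finset.mul_sum]
      rw [hcK]
      apply prefix_bound m K hK1 hKm
      · exact ha
      · intro i hi
        exact Finset.sum_nonneg fun j hj => hS0 i j hi (by rw [Finset.mem_range] at hj; omega)
      · intro i hi
        calc ∑ j ∈ range K, S i j ≤ ∑ j ∈ range m, S i j := by
              apply Finset.sum_le_sum_of_subset_of_nonneg (Finset.range_subset_range.2 hKm)
              intro j hj _
              exact hS0 i j hi (by rw [Finset.mem_range] at hj; omega)
          _ = 1 := hrow i hi
      · rw [Finset.sum_comm]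
        calc ∑ j ∈ range K, ∑ i ∈ range m, S i j
            = ∑ j ∈ range K, 1 := Finset.sum_congr rfl fun j hj =>
              hcol j (by rw [Finset.mem_range] at hj; omega)
          _ = K := by simp
    · rw [Finset.sum_sub_distrib, sub_eq_zero]
      rw [Finset.sum_comm]
      refine Finset.sum_congr rfl fun i hi => ?_
      rw [← Finset.mul_sum, hrow i (Finset.mem_range.1 hi), mul_one]
  have : ∑ j ∈ range m, b j * c j
      = ∑ j ∈ range m, b j * (c j - a j) + ∑ j ∈ range m, b j * a j := by
    rw [← Finset.sum_add_distrib]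
    exact Finset.sum_congr rfl fun j _ => by ring
  rw [this]
  have : ∑ j ∈ range m, b j * a j = ∑ j ∈ range m, a j * b j :=
    Finset.sum_congr rfl fun j _ => mul_comm _ _
  linarith

lemma singVals_nonneg {n : ℕ} (A : Matrix (Fin n) (Fin n) ℝ) (i : Fin n) :
    0 ≤ singVals A i := Real.sqrt_nonneg _

lemma singVals_sq {n : ℕ} (A : Matrix (Fin n) (Fin n) ℝ) (i : Fin n) :
    singVals A i ^ 2 = (show (Aᵀ * A).IsHermitian from Matrix.isHermitian_conjTranspose_mul_self A).eigenvalues i :=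
  Real.sq_sqrt ((Matrix.posSemidef_conjTranspose_mul_self A).eigenvalues_nonneg i)

lemma svd_exists {n : ℕ} (A : Matrix (Fin n) (Fin n) ℝ) :
    ∃ U V : Matrix (Fin n) (Fin n) ℝ, U ∈ Matrix.unitaryGroup (Fin n) ℝ ∧
      V ∈ Matrix.unitaryGroup (Fin n) ℝ ∧
      A = U * Matrix.diagonal (singVals A) * star V := by
  classical
  set hA := (show (Aᵀ * A).IsHermitian from Matrix.isHermitian_conjTranspose_mul_self A) with hhA
  set lam := hA.eigenvalues with hlam
  set σ := singVals A with hσ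
  have hl0 : ∀ i, 0 ≤ lam i :=
    (Matrix.posSemidef_conjTranspose_mul_self A).eigenvalues_nonneg
  have hσsq : ∀ i, σ i ^ 2 = lam i := singVals_sq A
  set bV := hA.eigenvectorBasis with hbV
  -- key dot product identity
  have hxy : ∀ x y : Fin n → ℝ, x ⬝ᵥ ((Aᴴ * A) *ᵥ y) = (A *ᵥ x) ⬝ᵥ (A *ᵥ y) := by
    intro x y
    rw [Matrix.dotProduct_mulVec, ← Matrix.vecMul_vecMul, ← Matrix.dotProduct_mulVec,
      Matrix.conjTranspose_eq_transpose_of_trivial, Matrix.vecMul_transpose]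
  have hdot : ∀ i j, (A *ᵥ ⇑(bV i)) ⬝ᵥ (A *ᵥ ⇑(bV j)) = lam j * (⇑(bV i) ⬝ᵥ ⇑(bV j)) := by
    intro i j
    rw [← hxy, Matrix.conjTranspose_eq_transpose_of_trivial, hA.mulVec_eigenvectorBasis, dotProduct_smul, smul_eq_mul]
  -- orthonormality of bV in dot product terms
  have hbVdot : ∀ i j, ⇑(bV i) ⬝ᵥ ⇑(bV j) = if i = j then (1:ℝ) else 0 := by
    intro i j
    have := orthonormal_iff_ite.mp bV.orthonormal i j
    rw [← this]
    simp [PiLp.inner_apply, dotProduct, RCLike.inner_apply, mul_comm]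
  set v : Fin n → EuclideanSpace ℝ (Fin n) :=
    fun i => (σ i)⁻¹ • ((WithLp.equiv 2 (Fin n → ℝ)).symm (A *ᵥ ⇑(bV i))) with hv
  have hvcoe : ∀ i, ⇑(v i) = (σ i)⁻¹ • (A *ᵥ ⇑(bV i)) := fun i => rfl
  have hwinner : ∀ i j : Fin n, (inner ℝ (v i) (v j) : ℝ)
      = (σ i)⁻¹ * ((σ j)⁻¹ * (lam j * (⇑(bV i) ⬝ᵥ ⇑(bV j)))) := by
    intro i j
    simp only [hv]
    rw [real_inner_smul_left, real_inner_smul_right]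
    congr 1
    congr 1
    rw [← hdot i j]
    simp [PiLp.inner_apply, dotProduct, mul_comm]
  have hortho : Orthonormal ℝ (({i | σ i ≠ 0} : Set (Fin n)).restrict v) := by
    rw [orthonormal_iff_ite]
    rintro ⟨i, hi⟩ ⟨j, hj⟩
    change (inner ℝ (v i) (v j) : ℝ) = _
    rw [hwinner i j, hbVdot i j]
    rcases eq_or_ne i j with rfl | hne
    · simp only [if_pos rfl, Subtype.mk_eq_mk]
      have hσi : σ i ≠ 0 := hi
      rw [← hσsq i]
      field_simp
    · rw [if_neg hne, if_neg (by simp [Subtype.ext_iff, hne])]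
      ring
  obtain ⟨u, hu⟩ := hortho.exists_orthonormalBasis_extension_of_card_eq
    (by simp [finrank_euclideanSpace])
  set U : Matrix (Fin n) (Fin n) ℝ :=
    (EuclideanSpace.basisFun (Fin n) ℝ).toBasis.toMatrix u.toBasis with hU
  have hUmem : U ∈ Matrix.unitaryGroup (Fin n) ℝ :=
    (EuclideanSpace.basisFun (Fin n) ℝ).toMatrix_orthonormalBasis_mem_unitary u
  have hUapp : ∀ i j, U i j = u j i := fun i j => rfl
  set V := hA.eigenvectorUnitary with hV
  have hAV : ∀ i, A *ᵥ ⇑(bV i) = σ i • ⇑(u i) := by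
    intro i
    by_cases h : σ i = 0
    · have hli : lam i = 0 := by rw [← hσsq i, h]; ring
      have : (A *ᵥ ⇑(bV i)) ⬝ᵥ (A *ᵥ ⇑(bV i)) = 0 := by
        rw [hdot i i, hbVdot i i, if_pos rfl, hli]; ring
      have hz : A *ᵥ ⇑(bV i) = 0 := dotProduct_self_eq_zero.mp this
      rw [hz, h, zero_smul]
    · have := hu i h
      rw [this, hvcoe i, smul_smul, mul_inv_cancel₀ h, one_smul]
  have hAVmat : A * (V : Matrix (Fin n) (Fin n) ℝ) = U * Matrix.diagonal σ := by
    ext j i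
    have h1 : (A * (V : Matrix (Fin n) (Fin n) ℝ)) j i = (A *ᵥ ⇑(bV i)) j := by
      simp only [Matrix.mul_apply, Matrix.mulVec, dotProduct, hV,
        Matrix.IsHermitian.eigenvectorUnitary_apply]
      rfl
    rw [h1, hAV i]
    simp only [Matrix.mul_diagonal, Pi.smul_apply, smul_eq_mul, hUapp]
    ring
  refine ⟨U, V, hUmem, V.2, ?_⟩
  have hVunit : (V : Matrix (Fin n) (Fin n) ℝ) * star (V : Matrix (Fin n) (Fin n) ℝ) = 1 :=
    Matrix.mem_unitaryGroup_iff.mp V.2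
  calc A = A * ((V : Matrix (Fin n) (Fin n) ℝ) * star (V : Matrix (Fin n) (Fin n) ℝ)) := by
        rw [hVunit, mul_one]
    _ = (A * (V : Matrix (Fin n) (Fin n) ℝ)) * star (V : Matrix (Fin n) (Fin n) ℝ) := by
        rw [mul_assoc]
    _ = U * Matrix.diagonal σ * star (V : Matrix (Fin n) (Fin n) ℝ) := by rw [hAVmat]


variable {n : ℕ}

/-- Row sums of squares of a real unitary (orthogonal) matrix are 1. -/
lemma unitary_row_sq_sum {M : Matrix (Fin n) (Fin n) ℝ}
    (hM : M ∈ Matrix.unitaryGroup (Fin n) ℝ) (i : Fin n) : ∑ j, M i j ^ 2 = 1 := by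
  have h := Matrix.mem_unitaryGroup_iff.mp hM
  have h2 := congrArg (fun X : Matrix (Fin n) (Fin n) ℝ => X i i) h
  simpa [Matrix.mul_apply, Matrix.star_eq_conjTranspose, Matrix.conjTranspose_apply,
    pow_two] using h2

lemma unitary_col_sq_sum {M : Matrix (Fin n) (Fin n) ℝ}
    (hM : M ∈ Matrix.unitaryGroup (Fin n) ℝ) (j : Fin n) : ∑ i, M i j ^ 2 = 1 := by
  have h := Matrix.mem_unitaryGroup_iff'.mp hM
  have h2 := congrArg (fun X : Matrix (Fin n) (Fin n) ℝ => X j j) h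
  simpa [Matrix.mul_apply, Matrix.star_eq_conjTranspose, Matrix.conjTranspose_apply,
    pow_two] using h2

/-- Von Neumann's trace inequality: `tr(Aᵀ B) ≤ Σᵢ σᵢ(A) σᵢ(B)`, where
`σA`, `σB` are the singular values of `A`, `B` arranged in nonincreasing order. -/
theorem vonNeumann_trace_inequality {n : ℕ} (A B : Matrix (Fin n) (Fin n) ℝ)
    (σA σB : Fin n → ℝ)
    (hσA : Antitone σA) (hσB : Antitone σB)
    (hA : ∃ e : Equiv.Perm (Fin n), ∀ i, σA i = singVals A (e i))
    (hB : ∃ e : Equiv.Perm (Fin n), ∀ i, σB i = singVals B (e i)) :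
    Matrix.trace (Aᵀ * B) ≤ ∑ i, σA i * σB i := by
  classical
  obtain ⟨eA, heA⟩ := hA
  obtain ⟨eB, heB⟩ := hB
  obtain ⟨U₁, V₁, hU₁, hV₁, hA1⟩ := svd_exists A
  obtain ⟨U₂, V₂, hU₂, hV₂, hB1⟩ := svd_exists B
  set σ₁ := singVals A with hσ₁
  set σ₂ := singVals B with hσ₂
  set M := star U₁ * U₂ with hM
  set N := star V₂ * V₁ with hN
  have hMmem : M ∈ Matrix.unitaryGroup (Fin n) ℝ := mul_mem (Unitary.star_mem hU₁) hU₂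
  have hNmem : N ∈ Matrix.unitaryGroup (Fin n) ℝ := mul_mem (Unitary.star_mem hV₂) hV₁
  -- trace identity
  have hAT : Aᵀ = V₁ * Matrix.diagonal σ₁ * star U₁ := by
    have : Aᵀ = star A := by
      rw [Matrix.star_eq_conjTranspose, Matrix.conjTranspose_eq_transpose_of_trivial]
    have hdstar : star (Matrix.diagonal σ₁) = Matrix.diagonal σ₁ := by
      rw [Matrix.star_eq_conjTranspose, Matrix.diagonal_conjTranspose]
      simp
    rw [this, hA1, Matrix.star_mul, Matrix.star_mul, star_star, hdstar, Matrix.mul_assoc]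
  have htrace : Matrix.trace (Aᵀ * B)
      = Matrix.trace (Matrix.diagonal σ₁ * M * (Matrix.diagonal σ₂ * N)) := by
    rw [hAT, hB1]
    rw [show V₁ * Matrix.diagonal σ₁ * star U₁ * (U₂ * Matrix.diagonal σ₂ * star V₂)
        = V₁ * (Matrix.diagonal σ₁ * M * (Matrix.diagonal σ₂ * (star V₂))) by
      rw [hM]; noncomm_ring]
    rw [Matrix.trace_mul_comm]
    rw [show Matrix.diagonal σ₁ * M * (Matrix.diagonal σ₂ * star V₂) * V₁
        = Matrix.diagonal σ₁ * M * (Matrix.diagonal σ₂ * N) by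
      rw [hN]; noncomm_ring]
  have htrace2 : Matrix.trace (Matrix.diagonal σ₁ * M * (Matrix.diagonal σ₂ * N))
      = ∑ i, ∑ j, σ₁ i * σ₂ j * (M i j * N j i) := by
    have hent : ∀ i, (Matrix.diagonal σ₁ * M * (Matrix.diagonal σ₂ * N)) i i
        = ∑ j, σ₁ i * M i j * (σ₂ j * N j i) := by
      intro i
      rw [Matrix.mul_apply]
      exact Finset.sum_congr rfl fun j _ => by
        rw [Matrix.diagonal_mul, Matrix.diagonal_mul]
    rw [Matrix.trace]
    refine Finset.sum_congr rfl fun i _ => ?_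
    rw [Matrix.diag_apply, hent i]
    exact Finset.sum_congr rfl fun j _ => by ring
  -- the doubly stochastic matrix
  set S : Fin n → Fin n → ℝ := fun i j => (M i j ^ 2 + N j i ^ 2) / 2 with hS
  have hS0 : ∀ i j, 0 ≤ S i j := fun i j => by positivity
  have hSrow : ∀ i, ∑ j, S i j = 1 := by
    intro i
    simp only [hS]
    rw [← Finset.sum_div, Finset.sum_add_distrib, unitary_row_sq_sum hMmem i,
      unitary_col_sq_sum hNmem i]
    norm_num
  have hScol : ∀ j, ∑ i, S i j = 1 := by
    intro j
    simp only [hS]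
    rw [← Finset.sum_div, Finset.sum_add_distrib, unitary_col_sq_sum hMmem j,
      unitary_row_sq_sum hNmem j]
    norm_num
  -- first bound
  have step1 : ∑ i, ∑ j, σ₁ i * σ₂ j * (M i j * N j i) ≤ ∑ i, ∑ j, σ₁ i * σ₂ j * S i j := by
    refine Finset.sum_le_sum fun i _ => Finset.sum_le_sum fun j _ => ?_
    have h1 : 0 ≤ σ₁ i := singVals_nonneg A i
    have h2 : 0 ≤ σ₂ j := singVals_nonneg B j
    have h3 : M i j * N j i ≤ S i j := by
      simp only [hS]
      nlinarith [sq_nonneg (M i j - N j i)]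
    exact mul_le_mul_of_nonneg_left h3 (by positivity)
  -- reindex by the permutations
  have step2 : ∑ i, ∑ j, σ₁ i * σ₂ j * S i j
      = ∑ i, ∑ j, σA i * σB j * S (eA i) (eB j) := by
    rw [← Equiv.sum_comp eA (fun i => ∑ j, σ₁ i * σ₂ j * S i j)]
    refine Finset.sum_congr rfl fun i _ => ?_
    rw [← Equiv.sum_comp eB (fun j => σ₁ (eA i) * σ₂ j * S (eA i) j)]
    refine Finset.sum_congr rfl fun j _ => ?_
    rw [heA i, heB j]
  -- conversion to ℕ-indexed sums and the rearrangement step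
  set a' : ℕ → ℝ := fun i => if h : i < n then σA ⟨i, h⟩ else 0 with ha'
  set b' : ℕ → ℝ := fun i => if h : i < n then σB ⟨i, h⟩ else 0 with hb'
  set S' : ℕ → ℕ → ℝ := fun i j =>
    if h : i < n ∧ j < n then S (eA ⟨i, h.1⟩) (eB ⟨j, h.2⟩) else 0 with hS'
  have hconv1 : ∑ i, ∑ j, σA i * σB j * S (eA i) (eB j)
      = ∑ i ∈ range n, ∑ j ∈ range n, a' i * b' j * S' i j := by
    rw [← Fin.sum_univ_eq_sum_range (fun i => ∑ j ∈ range n, a' i * b' j * S' i j) n]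
    refine Finset.sum_congr rfl fun i _ => ?_
    rw [← Fin.sum_univ_eq_sum_range (fun j => a' i.val * b' j * S' i.val j) n]
    refine Finset.sum_congr rfl fun j _ => ?_
    simp only [ha', hb', hS', dif_pos i.isLt, dif_pos j.isLt, dif_pos (And.intro i.isLt j.isLt),
      Fin.eta]
  have hconv2 : ∑ i ∈ range n, a' i * b' i = ∑ i, σA i * σB i := by
    rw [← Fin.sum_univ_eq_sum_range (fun i => a' i * b' i) n]
    refine Finset.sum_congr rfl fun i _ => ?_
    simp only [ha', hb', dif_pos i.isLt, Fin.eta]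
  have step3 : ∑ i ∈ range n, ∑ j ∈ range n, a' i * b' j * S' i j
      ≤ ∑ i ∈ range n, a' i * b' i := by
    apply ds_nat
    · intro i j hij hj
      simp only [ha', dif_pos hj, dif_pos (lt_of_le_of_lt hij hj)]
      exact hσA (by exact Fin.mk_le_mk.mpr hij)
    · intro i j hij hj
      simp only [hb', dif_pos hj, dif_pos (lt_of_le_of_lt hij hj)]
      exact hσB (by exact Fin.mk_le_mk.mpr hij)
    · intro i j hi hj
      simp only [hS', dif_pos (And.intro hi hj)]
      exact hS0 _ _
    · intro i hi
      rw [← Fin.sum_univ_eq_sum_range (fun j => S' i j) n]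
      calc ∑ j : Fin n, S' i j.val = ∑ j : Fin n, S (eA ⟨i, hi⟩) (eB j) := by
            refine Finset.sum_congr rfl fun j _ => ?_
            simp only [hS', dif_pos (And.intro hi j.isLt), Fin.eta]
        _ = ∑ j : Fin n, S (eA ⟨i, hi⟩) j := Equiv.sum_comp eB (fun x => S (eA ⟨i, hi⟩) x)
        _ = 1 := hSrow _
    · intro j hj
      rw [← Fin.sum_univ_eq_sum_range (fun i => S' i j) n]
      calc ∑ i : Fin n, S' i.val j = ∑ i : Fin n, S (eA i) (eB ⟨j, hj⟩) := by
            refine Finset.sum_congr rfl fun i _ => ?_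
            simp only [hS', dif_pos (And.intro i.isLt hj), Fin.eta]
        _ = ∑ i : Fin n, S i (eB ⟨j, hj⟩) := Equiv.sum_comp eA (fun x => S x (eB ⟨j, hj⟩))
        _ = 1 := hScol _
  calc Matrix.trace (Aᵀ * B) = ∑ i, ∑ j, σ₁ i * σ₂ j * (M i j * N j i) := by
        rw [htrace, htrace2]
    _ ≤ ∑ i, ∑ j, σ₁ i * σ₂ j * S i j := step1
    _ = ∑ i ∈ range n, ∑ j ∈ range n, a' i * b' j * S' i j := by rw [step2, hconv1]
    _ ≤ ∑ i ∈ range n, a' i * b' i := step3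
    _ = ∑ i, σA i * σB i := hconv2
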